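/- Let G be a finite simple graph that is not complete, let G be chordal, and let d be the largest cardinality of a clique in G. Then b_i ≤ b_j for all indices i, j with κ̃(G) < j ≤ i ≤ d; that is, the b-vector of G is nonincreasing on indices greater than κ̃(G). -/

import Mathlib

open Finset

/-- `G` is chordal: every cycle of length at least 4 has a chord, i.e. an edge
joining two non-consecutive vertices of the cycle. -/
def IsChordal {V : Type*} (G : SimpleGraph V) : Prop :=
  ∀ (n : ℕ), 4 ≤ n → ∀ f : ZMod n → V, Function.Injective f →
    (∀ i : ZMod n, G.Adj (f i) (f (i + 1))) →
    ∃ i j : ZMod n, i ≠ j ∧ i + 1 ≠ j ∧ j + 1 ≠ i ∧ G.Adj (f i) (f j)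

/-- The number of cliques of `G` with exactly `i` vertices. -/
noncomputable def cliqueCount {V : Type*} [Fintype V] (G : SimpleGraph V) (i : ℕ) : ℕ :=
  {s : Finset V | G.IsNClique i s}.ncard

/-- `W(G - Y)`: the number of connected components of the subgraph of `G` induced on the
complement of `Y`. -/
noncomputable def numComponents {V : Type*} [Fintype V] [DecidableEq V] (G : SimpleGraph V)
    (Y : Finset V) : ℕ :=
  Nat.card (G.induce (↑(Yᶜ) : Set V)).ConnectedComponent

/-- A vertex-cut of `G`: a set of vertices whose removal disconnects `G`. -/
def IsVertexCut {V : Type*} [Fintype V] [DecidableEq V] (G : SimpleGraph V) (Y : Finset V) :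
    Prop :=
  ¬ (G.induce (↑(Yᶜ) : Set V)).Connected

/-- The vertex connectivity `κ(G)`: the minimum cardinality of a vertex-cut. -/
noncomputable def vertexConnectivity {V : Type*} [Fintype V] [DecidableEq V]
    (G : SimpleGraph V) : ℕ :=
  sInf {k | ∃ Y : Finset V, IsVertexCut G Y ∧ Y.card = k}

/-- `s` is a maximal clique of `G`. -/
def IsMaxCliqueOf {V : Type*} (G : SimpleGraph V) (s : Finset V) : Prop :=
  G.IsClique (↑s : Set V) ∧ ∀ t : Finset V, G.IsClique (↑t : Set V) → s ⊆ t → s = t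

/-- A dominating `i`-clique of `G`: a set of `i`-cliques such that every maximal clique of
order at least `i` contains some member of the set. -/
def IsDominatingCliqueSet {V : Type*} (G : SimpleGraph V) (i : ℕ)
    (D : Finset (Finset V)) : Prop :=
  (∀ s ∈ D, G.IsNClique i s) ∧
    ∀ t : Finset V, IsMaxCliqueOf G t → i ≤ t.card → ∃ s ∈ D, s ⊆ t

/-- `d_i(G)`: the minimum cardinality of a dominating `i`-clique of `G`. -/
noncomputable def domNum {V : Type*} (G : SimpleGraph V) (i : ℕ) : ℕ :=
  sInf {k | ∃ D : Finset (Finset V), IsDominatingCliqueSet G i D ∧ D.card = k}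

/-- `κ̃(G)`: the maximum cardinality of the intersection of a pair of distinct maximal
cliques of `G`. -/
noncomputable def kappaTilde {V : Type*} [DecidableEq V] (G : SimpleGraph V) : ℕ :=
  sSup {k | ∃ C C' : Finset V, IsMaxCliqueOf G C ∧ IsMaxCliqueOf G C' ∧ C ≠ C' ∧
    (C ∩ C').card = k}

/-- `G` restricted to the vertex set `s` is a threshold graph: it can be built from a
one-vertex graph by repeatedly adding either an isolated vertex or a vertex adjacent to
all existing vertices. -/
inductive IsThresholdOn {V : Type*} [DecidableEq V] (G : SimpleGraph V) : Finset V → Prop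
  | single (v : V) : IsThresholdOn G {v}
  | isolated (s : Finset V) (v : V) (hv : v ∉ s) (hs : IsThresholdOn G s)
      (hiso : ∀ u ∈ s, ¬ G.Adj v u) : IsThresholdOn G (insert v s)
  | dominating (s : Finset V) (v : V) (hv : v ∉ s) (hs : IsThresholdOn G s)
      (hdom : ∀ u ∈ s, G.Adj v u) : IsThresholdOn G (insert v s)

/-- `G` is a threshold graph. -/
def IsThreshold {V : Type*} [Fintype V] [DecidableEq V] (G : SimpleGraph V) : Prop :=
  IsThresholdOn G Finset.univ

/-- `|C_i(G)|`: the number of maximal cliques of `G` with exactly `i` vertices. -/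
noncomputable def maxCliqueCount {V : Type*} [Fintype V] (G : SimpleGraph V) (i : ℕ) : ℕ :=
  {s : Finset V | IsMaxCliqueOf G s ∧ s.card = i}.ncard

/-- `s` is a maximal clique of `G` among the cliques contained in `W`, i.e. a facet of the
restriction of the clique complex of `G` to `W`. -/
def IsMaxCliqueWithin {V : Type*} (G : SimpleGraph V) (W : Finset V) (s : Finset V) : Prop :=
  s ⊆ W ∧ G.IsClique (↑s : Set V) ∧
    ∀ t : Finset V, t ⊆ W → G.IsClique (↑t : Set V) → s ⊆ t → s = t

/-- The restriction of the clique complex of `G` to `W` is pure: all its facets have the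
same cardinality. -/
def PureOn {V : Type*} (G : SimpleGraph V) (W : Finset V) : Prop :=
  ∀ s t : Finset V, IsMaxCliqueWithin G W s → IsMaxCliqueWithin G W t → s.card = t.card

namespace BVec
set_option linter.unusedSectionVars false
attribute [local instance] Classical.propDecidable

variable {V : Type} [DecidableEq V]

def AdjIn (G : SimpleGraph V) (W : Finset V) (u v : V) : Prop :=
  u ∈ W ∧ v ∈ W ∧ G.Adj u v

def Rch (G : SimpleGraph V) (W : Finset V) : V → V → Prop :=
  Relation.ReflTransGen (AdjIn G W)

lemma Rch.symm {G : SimpleGraph V} {W : Finset V} {u v : V} (h : Rch G W u v) : Rch G W v u :=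
  by
    haveI : Std.Symm (AdjIn G W) := ⟨fun _ _ h => ⟨h.2.1, h.1, h.2.2.symm⟩⟩
    exact Std.Symm.symm (r := Relation.ReflTransGen (AdjIn G W)) (self := Relation.ReflTransGen.symmetric) _ _ h

lemma Rch.mem_right {G : SimpleGraph V} {W : Finset V} {u v : V} (h : Rch G W u v) :
    v ∈ W ∨ v = u := by
  induction h with
  | refl => right; rfl
  | tail _ st _ => left; exact st.2.1

/-- A walk (as a function) from x to y with interior in A. -/
def WalkIn (G : SimpleGraph V) (A : Finset V) (x y : V) (p : ℕ → V) (n : ℕ) : Prop :=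
  p 0 = x ∧ p n = y ∧ (∀ k, 0 < k → k < n → p k ∈ A) ∧ ∀ k < n, G.Adj (p k) (p (k + 1))

lemma walkIn_shorten {G : SimpleGraph V} {A : Finset V} {x y : V} {p : ℕ → V} {n : ℕ}
    (hw : WalkIn G A x y p n) (i δ : ℕ) (hd : 0 < δ) (hin : i + δ ≤ n)
    (hjun : i + δ < n → G.Adj (p i) (p (i + δ + 1)))
    (hend : i + δ = n → p i = p n) :
    WalkIn G A x y (fun k => if k ≤ i then p k else p (k + δ)) (n - δ) := by
  obtain ⟨h0, hn, hA, hadj⟩ := hw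
  refine ⟨by simp [h0], ?_, ?_, ?_⟩
  · show (if n - δ ≤ i then p (n - δ) else p (n - δ + δ)) = y
    by_cases h : n - δ ≤ i
    · have he : i + δ = n := by omega
      have h2 : n - δ = i := by omega
      rw [if_pos h, h2, hend he, hn]
    · rw [if_neg h, (by omega : n - δ + δ = n), hn]
  · intro k hk0 hkn
    show (if k ≤ i then p k else p (k + δ)) ∈ A
    by_cases h : k ≤ i
    · rw [if_pos h]; exact hA k hk0 (by omega)
    · rw [if_neg h]; exact hA _ (by omega) (by omega)
  · intro k hk
    show G.Adj (if k ≤ i then p k else p (k + δ)) (if k + 1 ≤ i then p (k + 1) else p (k + 1 + δ))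
    by_cases h : k ≤ i
    · by_cases h2 : k + 1 ≤ i
      · rw [if_pos h, if_pos h2]; exact hadj k (by omega)
      · have hk_eq : k = i := by omega
        rw [if_pos h, if_neg h2, (by omega : k + 1 + δ = i + δ + 1), hk_eq]
        exact hjun (by omega)
    · rw [if_neg h, if_neg (by omega : ¬ k + 1 ≤ i), (by omega : k + 1 + δ = k + δ + 1)]
      exact hadj (k + δ) (by omega)

/-- A minimal-length walk is injective and chord-free. -/
lemma min_walk_good {G : SimpleGraph V} {A : Finset V} {x y : V} {p : ℕ → V} {n : ℕ}
    (hw : WalkIn G A x y p n)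
    (hmin : ∀ m q, WalkIn G A x y q m → n ≤ m) :
    (∀ k l, k < l → l ≤ n → p k ≠ p l) ∧
    (∀ k l, k + 2 ≤ l → l ≤ n → ¬ G.Adj (p k) (p l)) := by
  constructor
  · intro k l hkl hln heq
    have hw' := walkIn_shorten hw k (l - k) (by omega) (by omega)
      (fun h => by
        rw [(by omega : k + (l - k) = l)] at *
        rw [heq]
        exact hw.2.2.2 l (by omega))
      (fun h => by
        rw [(by omega : k + (l - k) = l)] at h
        rw [heq, h])
    have := hmin _ _ hw'
    omega
  · intro k l hkl hln hadj
    have hw' := walkIn_shorten hw k (l - k - 1) (by omega) (by omega)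
      (fun h => by rw [(by omega : k + (l - k - 1) + 1 = l)]; exact hadj)
      (fun h => by omega)
    have := hmin _ _ hw'
    omega

lemma exists_min_walk {G : SimpleGraph V} {A : Finset V} {x y : V}
    (h : ∃ n p, WalkIn G A x y p n) :
    ∃ n p, WalkIn G A x y p n ∧ ∀ m q, WalkIn G A x y q m → n ≤ m := by
  have h' : ∃ n, ∃ p, WalkIn G A x y p n := by
    obtain ⟨n, p, hp⟩ := h; exact ⟨n, p, hp⟩
  obtain ⟨p, hp⟩ := Nat.find_spec h'
  exact ⟨Nat.find h', p, hp, fun m q hq => Nat.find_min' h' ⟨q, hq⟩⟩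

lemma rch_to_walk {G : SimpleGraph V} {A : Finset V} {u v : V} (hu : u ∈ A)
    (h : Rch G A u v) :
    ∃ (n : ℕ) (p : ℕ → V), p 0 = u ∧ p n = v ∧ (∀ k ≤ n, p k ∈ A) ∧
      ∀ k < n, G.Adj (p k) (p (k + 1)) := by
  induction h with
  | refl =>
    exact ⟨0, fun _ => u, rfl, rfl, fun k _ => hu, fun k hk => absurd hk (by omega)⟩
  | @tail c w huc st ih =>
    obtain ⟨n, p, h0, hn, hmem, hadj⟩ := ih
    refine ⟨n + 1, fun k => if k ≤ n then p k else w, by simp [h0],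
      by simp [if_neg (by omega : ¬ n + 1 ≤ n)], ?_, ?_⟩
    · intro k hk
      show (if k ≤ n then p k else w) ∈ A
      by_cases h : k ≤ n
      · rw [if_pos h]; exact hmem k h
      · rw [if_neg h]; exact st.2.1
    · intro k hk
      show G.Adj (if k ≤ n then p k else w) (if k + 1 ≤ n then p (k + 1) else w)
      by_cases h : k + 1 ≤ n
      · rw [if_pos (by omega : k ≤ n), if_pos h]
        exact hadj k (by omega)
      · have hkn : k = n := by omega
        rw [if_pos (by omega : k ≤ n), if_neg h, hkn, hn]
        exact st.2.2

noncomputable def compOf (G : SimpleGraph V) (W S : Finset V) (a : V) : Finset V :=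
  (W \ S).filter (fun u => Rch G (W \ S) a u)

lemma compOf_subset {G : SimpleGraph V} {W S : Finset V} {a : V} :
    compOf G W S a ⊆ W \ S := filter_subset _ _

lemma mem_compOf_self {G : SimpleGraph V} {W S : Finset V} {a : V} (ha : a ∈ W \ S) :
    a ∈ compOf G W S a := mem_filter.2 ⟨ha, Relation.ReflTransGen.refl⟩

lemma rch_of_mem_compOf {G : SimpleGraph V} {W S : Finset V} {a u : V}
    (h : u ∈ compOf G W S a) : Rch G (W \ S) a u := (mem_filter.1 h).2

lemma compOf_closed {G : SimpleGraph V} {W S : Finset V} {a u v : V}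
    (hu : u ∈ compOf G W S a) (hv : v ∈ W \ S) (hadj : G.Adj u v) :
    v ∈ compOf G W S a :=
  mem_filter.2 ⟨hv, (rch_of_mem_compOf hu).tail ⟨(mem_filter.1 hu).1, hv, hadj⟩⟩

lemma no_edge_comp {G : SimpleGraph V} {W S : Finset V} {a b u v : V}
    (hsep : ¬ Rch G (W \ S) a b)
    (hu : u ∈ compOf G W S a) (hv : v ∈ compOf G W S b) :
    ¬ G.Adj u v ∧ u ≠ v := by
  constructor
  · intro hadj
    have hvA : v ∈ compOf G W S a := compOf_closed hu (compOf_subset hv) hadj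
    exact hsep ((rch_of_mem_compOf hvA).trans (rch_of_mem_compOf hv).symm)
  · intro h
    subst h
    exact hsep ((rch_of_mem_compOf hu).trans (rch_of_mem_compOf hv).symm)

lemma sep_nbr {G : SimpleGraph V} {W S : Finset V} {a b : V} {s : V}
    (hs : s ∈ S) (haWS : a ∈ W \ S)
    (hsep : ¬ Rch G (W \ S) a b)
    (hrch : Rch G (W \ S.erase s) a b) :
    ∃ u ∈ compOf G W S a, G.Adj u s := by
  have key : ∀ v : V, Rch G (W \ S.erase s) a v →
      v ∈ compOf G W S a ∨ ∃ u ∈ compOf G W S a, G.Adj u s := by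
    intro v hv
    induction hv with
    | refl => exact Or.inl (mem_compOf_self haWS)
    | @tail c w hac st ih =>
      rcases ih with hc | hfound
      · by_cases hws : w = s
        · exact Or.inr ⟨c, hc, hws ▸ st.2.2⟩
        · refine Or.inl (compOf_closed hc ?_ st.2.2)
          have := st.2.1
          rw [mem_sdiff] at this ⊢
          exact ⟨this.1, fun hwS => this.2 (mem_erase.2 ⟨hws, hwS⟩)⟩
      · exact Or.inr hfound
  rcases key b hrch with hb | h
  · exact absurd (rch_of_mem_compOf hb) hsep
  · exact h

lemma rch_restrict {G : SimpleGraph V} {W S : Finset V} {a u v : V}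
    (hu : u ∈ compOf G W S a) (h : Rch G (W \ S) u v) :
    Rch G (compOf G W S a) u v := by
  induction h with
  | refl => exact Relation.ReflTransGen.refl
  | @tail c w huc st ih =>
    have hc : c ∈ compOf G W S a := by
      rcases ih.mem_right with h | h
      · exact h
      · exact h ▸ hu
    exact ih.tail ⟨hc, compOf_closed hc st.2.1 st.2.2, st.2.2⟩

lemma exists_nice_walk {G : SimpleGraph V} {A : Finset V} {x y u u' : V}
    (hu : u ∈ A) (hu' : u' ∈ A) (hux : G.Adj u x) (huy : G.Adj u' y)
    (hrch : Rch G A u u') (hxy : ¬ G.Adj x y) (hne : x ≠ y) :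
    ∃ (n : ℕ) (p : ℕ → V), WalkIn G A x y p n ∧ 2 ≤ n ∧
      (∀ k l, k < l → l ≤ n → p k ≠ p l) ∧
      (∀ k l, k + 2 ≤ l → l ≤ n → ¬ G.Adj (p k) (p l)) := by
  obtain ⟨nw, pw, h0, hnw, hmem, hadjw⟩ := rch_to_walk hu hrch
  have hex : ∃ (m : ℕ) (p : ℕ → V), WalkIn G A x y p m := by
    refine ⟨nw + 2, fun k => if k = 0 then x else if k ≤ nw + 1 then pw (k - 1) else y,
      ?_, ?_, ?_, ?_⟩
    · simp
    · show (if nw + 2 = 0 then x else if nw + 2 ≤ nw + 1 then pw (nw + 2 - 1) else y) = y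
      rw [if_neg (by omega), if_neg (by omega)]
    · intro k hk0 hkn
      show (if k = 0 then x else if k ≤ nw + 1 then pw (k - 1) else y) ∈ A
      rw [if_neg (by omega), if_pos (by omega)]
      exact hmem (k - 1) (by omega)
    · intro k hk
      show G.Adj (if k = 0 then x else if k ≤ nw + 1 then pw (k - 1) else y)
        (if k + 1 = 0 then x else if k + 1 ≤ nw + 1 then pw (k + 1 - 1) else y)
      by_cases hk0 : k = 0
      · subst hk0
        rw [if_pos rfl, if_neg (by omega), if_pos (by omega)]
        simpa [h0] using hux.symm
      · by_cases hk1 : k ≤ nw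
        · rw [if_neg hk0, if_pos (by omega), if_neg (by omega), if_pos (by omega)]
          have h2 : k - 1 + 1 = k + 1 - 1 := by omega
          have := hadjw (k - 1) (by omega)
          rwa [h2] at this
        · have hkeq : k = nw + 1 := by omega
          subst hkeq
          rw [if_neg hk0, if_pos le_rfl, if_neg (by omega), if_neg (by omega)]
          simpa [hnw] using huy
  obtain ⟨n, p, hp, hmin⟩ := exists_min_walk hex
  have hg := min_walk_good hp hmin
  refine ⟨n, p, hp, ?_, hg.1, hg.2⟩
  rcases Nat.lt_or_ge n 2 with h | h
  · exfalso
    interval_cases n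
    · exact hne (hp.1 ▸ hp.2.1 ▸ rfl)
    · have := hp.2.2.2 0 (by omega)
      rw [hp.1] at this
      have h1 : p 1 = y := hp.2.1
      rw [h1] at this
      exact hxy this
  · exact h

lemma sep_is_clique {G : SimpleGraph V} (hch : IsChordal G) {W S : Finset V} {a b : V}
    (hsep : ¬ Rch G (W \ S) a b)
    (hnbrA : ∀ s ∈ S, ∃ u ∈ compOf G W S a, G.Adj u s)
    (hnbrB : ∀ s ∈ S, ∃ u ∈ compOf G W S b, G.Adj u s) :
    G.IsClique (↑S : Set V) := by
  intro x hx y hy hne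
  by_contra hxy
  have hxS : x ∈ S := hx
  have hyS : y ∈ S := hy
  set A := compOf G W S a with hAdef
  set B := compOf G W S b with hBdef
  -- build the two chord-free paths
  obtain ⟨ux, huxA, huxadj⟩ := hnbrA x hxS
  obtain ⟨uy, huyA, huyadj⟩ := hnbrA y hyS
  obtain ⟨vx, hvxB, hvxadj⟩ := hnbrB x hxS
  obtain ⟨vy, hvyB, hvyadj⟩ := hnbrB y hyS
  have hrchA : Rch G A ux uy :=
    rch_restrict huxA ((rch_of_mem_compOf huxA).symm.trans (rch_of_mem_compOf huyA))
  have hrchB : Rch G B vx vy :=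
    rch_restrict hvxB ((rch_of_mem_compOf hvxB).symm.trans (rch_of_mem_compOf hvyB))
  obtain ⟨n1, q, hq, hn1, hqinj, hqcf⟩ :=
    exists_nice_walk huxA huyA huxadj huyadj hrchA hxy hne
  obtain ⟨n2, r, hr, hn2, hrinj, hrcf⟩ :=
    exists_nice_walk hvxB hvyB hvxadj hvyadj hrchB hxy hne
  set n := n1 + n2 with hndef
  have h4 : 4 ≤ n := by omega
  haveI : NeZero n := ⟨by omega⟩
  haveI : Fact (1 < n) := ⟨by omega⟩
  set g : ℕ → V := fun k => if k < n1 then q k else r (n - k) with hgdef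
  have hgq : ∀ k, k < n1 → g k = q k := fun k h => if_pos h
  have hgr : ∀ k, n1 ≤ k → g k = r (n - k) := fun k h => if_neg (by omega)
  have hgn1 : g n1 = y := by
    rw [hgr n1 le_rfl, (by omega : n - n1 = n2), hr.2.1]
  have hg0 : g 0 = x := by rw [hgq 0 (by omega), hq.1]
  have hgn : g n = x := by rw [hgr n (by omega), (by omega : n - n = 0), hr.1]
  have hxB : x ∉ B := fun h => (mem_sdiff.1 (compOf_subset h)).2 hxS
  have hstep : ∀ k, k < n → G.Adj (g k) (g (k + 1)) := by
    intro k hk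
    by_cases h1 : k + 1 < n1
    · rw [hgq k (by omega), hgq (k + 1) h1]
      exact hq.2.2.2 k (by omega)
    · by_cases h2 : k + 1 = n1
      · rw [hgq k (by omega), h2, hgn1, ← hq.2.1, ← h2]
        exact hq.2.2.2 k (by omega)
      · have hk1 : n1 ≤ k := by omega
        rw [hgr k hk1, hgr (k + 1) (by omega), (by omega : n - k = (n - (k + 1)) + 1)]
        exact (hr.2.2.2 (n - (k + 1)) (by omega)).symm
  have hginj : ∀ k l, k < l → l < n → g k ≠ g l := by
    intro k l hkl hln
    by_cases hl1 : l < n1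
    · rw [hgq k (by omega), hgq l hl1]
      exact hqinj k l hkl (by omega)
    · by_cases hk1 : k < n1
      · rcases eq_or_lt_of_le (show n1 ≤ l by omega) with he | hlt
        · have hgl : g l = q n1 := by rw [← he, hgn1, hq.2.1]
          rw [hgq k hk1, hgl]
          exact hqinj k n1 (by omega) le_rfl
        · have hglB : g l ∈ B := by
            rw [hgr l (by omega)]
            exact hr.2.2.1 (n - l) (by omega) (by omega)
          by_cases hk0 : k = 0
          · subst hk0
            rw [hg0]
            intro heq
            rw [← heq] at hglB
            exact hxB hglB
          · have hgkA : g k ∈ A := by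
              rw [hgq k hk1]
              exact hq.2.2.1 k (by omega) (by omega)
            intro heq
            exact (no_edge_comp hsep hgkA hglB).2 heq
      · rw [hgr k (by omega), hgr l (by omega)]
        exact fun heq => (hrinj (n - l) (n - k) (by omega) (by omega)) heq.symm
  set f : ZMod n → V := fun z => g z.val with hfdef
  have hfinj : Function.Injective f := by
    intro z1 z2 he
    by_contra hne'
    have hvne : z1.val ≠ z2.val := fun h => hne' (ZMod.val_injective n h)
    rcases lt_or_gt_of_ne hvne with h | h
    · exact hginj z1.val z2.val h (ZMod.val_lt z2) he
    · exact hginj z2.val z1.val h (ZMod.val_lt z1) he.symm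
  have hval : ∀ w : ZMod n, (w + 1).val = (w.val + 1) % n := by
    intro w
    rw [ZMod.val_add, ZMod.val_one]
  have hfadj : ∀ z : ZMod n, G.Adj (f z) (f (z + 1)) := by
    intro z
    show G.Adj (g z.val) (g ((z + 1).val))
    rw [hval]
    by_cases h : z.val + 1 < n
    · rw [Nat.mod_eq_of_lt h]
      exact hstep z.val (by omega)
    · have hz : z.val = n - 1 := by have := ZMod.val_lt z; omega
      rw [hz, (by omega : n - 1 + 1 = n), Nat.mod_self, hg0]
      have := hstep (n - 1) (by omega)
      rwa [(by omega : n - 1 + 1 = n), hgn] at this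
  have hmain : ∀ k l, k < l → l < n → (k + 1) % n ≠ l → (l + 1) % n ≠ k →
      ¬ G.Adj (g k) (g l) := by
    intro k l hkl hln hc1 hc2 hadj
    have hl2 : k + 2 ≤ l := by
      rcases em (l = k + 1) with he | he
      · exact absurd (by rw [Nat.mod_eq_of_lt (by omega)]; omega) hc1
      · omega
    by_cases hC1 : l ≤ n1
    · have hgl : g l = q l := by
        rcases lt_or_eq_of_le hC1 with h | h
        · exact hgq l h
        · rw [h, hgn1]
          exact hq.2.1.symm
      rw [hgq k (by omega), hgl] at hadj
      exact hqcf k l hl2 hC1 hadj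
    · by_cases hC2 : n1 ≤ k
      · rw [hgr k hC2, hgr l (by omega)] at hadj
        exact hrcf (n - l) (n - k) (by omega) (by omega) hadj.symm
      · have hglr : g l = r (n - l) := hgr l (by omega)
        by_cases hk0 : k = 0
        · subst hk0
          have hlne : l ≠ n - 1 := by
            intro he
            exact hc2 (by rw [he, (by omega : n - 1 + 1 = n), Nat.mod_self])
          rw [hg0, ← hr.1, hglr] at hadj
          exact hrcf 0 (n - l) (by omega) (by omega) hadj
        · have hgkA : g k ∈ A := by
            rw [hgq k (by omega)]
            exact hq.2.2.1 k (by omega) (by omega)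
          have hglB : g l ∈ B := by
            rw [hglr]
            exact hr.2.2.1 (n - l) (by omega) (by omega)
          exact (no_edge_comp hsep hgkA hglB).1 hadj
  obtain ⟨z1, z2, hz12, hz1, hz2, hzadj⟩ := hch n h4 f hfinj hfadj
  have hkl_ne : z1.val ≠ z2.val := fun h => hz12 (ZMod.val_injective n h)
  have hc1 : (z1.val + 1) % n ≠ z2.val := by
    intro he
    exact hz1 (ZMod.val_injective n (by rw [hval]; exact he))
  have hc2 : (z2.val + 1) % n ≠ z1.val := by
    intro he
    exact hz2 (ZMod.val_injective n (by rw [hval]; exact he))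
  rcases lt_or_gt_of_ne hkl_ne with h | h
  · exact hmain z1.val z2.val h (ZMod.val_lt z2) hc1 hc2 hzadj
  · exact hmain z2.val z1.val h (ZMod.val_lt z1) hc2 hc1 hzadj.symm

def SimpOn (G : SimpleGraph V) (W : Finset V) (v : V) : Prop :=
  v ∈ W ∧ ∀ x ∈ W, ∀ y ∈ W, G.Adj v x → G.Adj v y → x ≠ y → G.Adj x y

lemma simpOn_of_clique {G : SimpleGraph V} {W : Finset V} (hW : G.IsClique (↑W : Set V))
    {v : V} (hv : v ∈ W) : SimpOn G W v :=
  ⟨hv, fun x hx y hy _ _ hne => hW hx hy hne⟩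

lemma no_reach_pair {G : SimpleGraph V} {W' : Finset V} {a b : V}
    (hsub : ∀ c ∈ W', c = a ∨ c = b) (hne : a ≠ b) (hnadj : ¬ G.Adj a b) :
    ¬ Rch G W' a b := by
  intro h
  rcases Relation.ReflTransGen.cases_head h with he | ⟨c, st, _⟩
  · exact hne he
  · rcases hsub c st.2.1 with h' | h'
    · subst h'; exact G.loopless.irrefl _ st.2.2
    · subst h'; exact hnadj st.2.2

theorem two_simplicial (G : SimpleGraph V) (hch : IsChordal G) :
    ∀ (n : ℕ) (W : Finset V), W.card ≤ n → W.Nonempty →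
      G.IsClique (↑W : Set V) ∨
        ∃ α β, SimpOn G W α ∧ SimpOn G W β ∧ α ≠ β ∧ ¬ G.Adj α β := by
  intro n
  induction n with
  | zero =>
    intro W hc hne
    exact absurd (card_pos.2 hne) (by omega)
  | succ n IH =>
    intro W hc hWne
    by_cases hclq : G.IsClique (↑W : Set V)
    · exact Or.inl hclq
    · right
      have hab : ∃ a ∈ W, ∃ b ∈ W, a ≠ b ∧ ¬ G.Adj a b := by
        by_contra hcon
        push_neg at hcon
        exact hclq fun x hx y hy hne => hcon x hx y hy hne
      obtain ⟨a, haW, b, hbW, hne, hnadj⟩ := hab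
      set F : Finset (Finset V) :=
        (W \ {a, b}).powerset.filter (fun S => ¬ Rch G (W \ S) a b) with hF
      have hS0 : W \ {a, b} ∈ F := by
        rw [hF, mem_filter]
        refine ⟨mem_powerset_self _, no_reach_pair ?_ hne hnadj⟩
        intro c hcmem
        rw [sdiff_sdiff_right_self] at hcmem
        have := (mem_inter.1 hcmem).2
        rcases mem_insert.1 this with h | h
        · exact Or.inl h
        · exact Or.inr (mem_singleton.1 h)
      obtain ⟨S, hSF, hSmin⟩ := exists_min_image F card ⟨_, hS0⟩
      rw [hF, mem_filter, mem_powerset] at hSF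
      obtain ⟨hSsub, hsep⟩ := hSF
      have haS : a ∉ S := fun h => by
        have h2 := mem_sdiff.1 (hSsub h)
        exact h2.2 (mem_insert_self _ _)
      have hbS : b ∉ S := fun h => by
        have h2 := mem_sdiff.1 (hSsub h)
        exact h2.2 (mem_insert_of_mem (mem_singleton_self _))
      have hSW : S ⊆ W := hSsub.trans sdiff_subset
      have haWS : a ∈ W \ S := mem_sdiff.2 ⟨haW, haS⟩
      have hbWS : b ∈ W \ S := mem_sdiff.2 ⟨hbW, hbS⟩
      have hRch : ∀ s ∈ S, Rch G (W \ S.erase s) a b := by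
        intro s hsS
        by_contra hno
        have hmem : S.erase s ∈ F := by
          rw [hF, mem_filter, mem_powerset]
          exact ⟨(erase_subset _ _).trans hSsub, hno⟩
        have h1 := hSmin _ hmem
        have h2 : (S.erase s).card < S.card := card_erase_lt_of_mem hsS
        omega
      have hnbrA : ∀ s ∈ S, ∃ u ∈ compOf G W S a, G.Adj u s := fun s hsS =>
        sep_nbr hsS haWS hsep (hRch s hsS)
      have hsep' : ¬ Rch G (W \ S) b a := fun h => hsep h.symm
      have hnbrB : ∀ s ∈ S, ∃ u ∈ compOf G W S b, G.Adj u s := fun s hsS =>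
        sep_nbr hsS hbWS hsep' ((hRch s hsS).symm)
      have hSclq : G.IsClique (↑S : Set V) := sep_is_clique hch hsep hnbrA hnbrB
      have side : ∀ c : V, c ∈ W \ S → (∀ s ∈ S, ∃ u ∈ compOf G W S c, G.Adj u s) →
          (∃ w ∈ W, w ∉ compOf G W S c ∧ w ∉ S) →
          ∃ α ∈ compOf G W S c, SimpOn G W α := by
        intro c hcWS hnbr ⟨w0, hw0W, hw0A, hw0S⟩
        set A := compOf G W S c with hA
        set A' := A ∪ S with hA'
        have hA'W : A' ⊆ W := union_subset (compOf_subset.trans sdiff_subset) hSW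
        have hbig : ∀ v ∈ A, ∀ x ∈ W, G.Adj v x → x ∈ A' := by
          intro v hv x hxW hadj
          by_cases hxS : x ∈ S
          · exact mem_union_right _ hxS
          · exact mem_union_left _ (compOf_closed hv (mem_sdiff.2 ⟨hxW, hxS⟩) hadj)
        have hlift : ∀ v ∈ A, SimpOn G A' v → SimpOn G W v := by
          intro v hv hsimp
          exact ⟨hA'W (mem_union_left _ hv), fun x hx y hy hvx hvy hxy =>
            hsimp.2 x (hbig v hv x hx hvx) y (hbig v hv y hy hvy) hvx hvy hxy⟩
        have hcA : c ∈ A := mem_compOf_self hcWS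
        have hA'card : A'.card ≤ n := by
          have hlt : A'.card < W.card :=
            card_lt_card ⟨hA'W, fun h => (mem_union.1 (h hw0W)).elim hw0A hw0S⟩
          omega
        rcases IH A' hA'card ⟨c, mem_union_left _ hcA⟩ with
          hclq' | ⟨s1, s2, hs1, hs2, hne12, hnadj12⟩
        · exact ⟨c, hcA, hlift c hcA (simpOn_of_clique hclq' (mem_union_left _ hcA))⟩
        · have hnotboth : s1 ∉ S ∨ s2 ∉ S := by
            by_contra hcon
            push_neg at hcon
            exact hnadj12 (hSclq hcon.1 hcon.2 hne12)
          have hpick : ∃ v, v ∈ A ∧ SimpOn G A' v := by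
            rcases hnotboth with h | h
            · exact ⟨s1, (mem_union.1 hs1.1).resolve_right h, hs1⟩
            · exact ⟨s2, (mem_union.1 hs2.1).resolve_right h, hs2⟩
          obtain ⟨v, hvA, hvsimp⟩ := hpick
          exact ⟨v, hvA, hlift v hvA hvsimp⟩
      obtain ⟨α, hαA, hαs⟩ := side a haWS hnbrA
        ⟨b, hbW, fun h => hsep (rch_of_mem_compOf h), hbS⟩
      obtain ⟨β, hβB, hβs⟩ := side b hbWS hnbrB
        ⟨a, haW, fun h => hsep (rch_of_mem_compOf h).symm, haS⟩
      have hedge := no_edge_comp hsep hαA hβB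
      exact ⟨α, β, hαs, hβs, hedge.2, hedge.1⟩

lemma exists_simpOn (G : SimpleGraph V) (hch : IsChordal G) (W : Finset V)
    (hne : W.Nonempty) : ∃ v, SimpOn G W v := by
  rcases two_simplicial G hch W.card W le_rfl hne with hclq | ⟨α, _, hα, _, _, _⟩
  · exact ⟨hne.choose, simpOn_of_clique hclq hne.choose_spec⟩
  · exact ⟨α, hα⟩

lemma exists_peo_on (G : SimpleGraph V) (hch : IsChordal G) :
    ∀ (n : ℕ) (W : Finset V), W.card ≤ n →
      ∃ e : V → ℕ, Set.InjOn e ↑W ∧ (∀ v ∈ W, e v < W.card) ∧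
        ∀ v ∈ W, ∀ x ∈ W, ∀ y ∈ W, e x < e v → e y < e v →
          G.Adj v x → G.Adj v y → x ≠ y → G.Adj x y := by
  intro n
  induction n with
  | zero =>
    intro W hc
    have hW : W = ∅ := card_eq_zero.1 (by omega)
    subst hW
    exact ⟨fun _ => 0, by simp, by simp, by simp⟩
  | succ n IH =>
    intro W hc
    rcases W.eq_empty_or_nonempty with hW | hWne
    · subst hW
      exact ⟨fun _ => 0, by simp, by simp, by simp⟩
    · obtain ⟨v, hvsimp⟩ := exists_simpOn G hch W hWne
      have hvW : v ∈ W := hvsimp.1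
      obtain ⟨e', hinj', hbd', hp'⟩ := IH (W.erase v) (by
        have := card_erase_of_mem hvW
        omega)
      set e : V → ℕ := fun u => if u = v then W.card - 1 else e' u with he
      have hcardpos : 0 < W.card := card_pos.2 hWne
      have hbe : ∀ u ∈ W, u ≠ v → e u < W.card - 1 := by
        intro u huW hune
        have : e u = e' u := if_neg hune
        rw [this]
        have := hbd' u (mem_erase.2 ⟨hune, huW⟩)
        have h2 := card_erase_of_mem hvW
        omega
      have hev : e v = W.card - 1 := if_pos rfl
      refine ⟨e, ?_, ?_, ?_⟩
      · intro u hu w hw heq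
        by_cases hu' : u = v
        · by_cases hw' : w = v
          · rw [hu', hw']
          · exfalso
            have := hbe w hw hw'
            rw [← heq, hu', hev] at this
            omega
        · by_cases hw' : w = v
          · exfalso
            have := hbe u hu hu'
            rw [heq, hw', hev] at this
            omega
          · refine hinj' (by simp [mem_erase, hu', hu]) (by simp [mem_erase, hw', hw]) ?_
            have h1 : e u = e' u := if_neg hu'
            have h2 : e w = e' w := if_neg hw'
            rwa [h1, h2] at heq
      · intro u huW
        by_cases hu' : u = v
        · rw [hu', hev]; omega
        · have := hbe u huW hu'; omega
      · intro w hwW x hxW y hyW hex hey hax hay hxy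
        by_cases hw' : w = v
        · subst hw'
          exact hvsimp.2 x hxW y hyW hax hay hxy
        · have hxv : x ≠ v := by
            intro h
            rw [h, hev] at hex
            have := hbe w hwW hw'
            omega
          have hyv : y ≠ v := by
            intro h
            rw [h, hev] at hey
            have := hbe w hwW hw'
            omega
          refine hp' w (mem_erase.2 ⟨hw', hwW⟩) x (mem_erase.2 ⟨hxv, hxW⟩)
            y (mem_erase.2 ⟨hyv, hyW⟩) ?_ ?_ hax hay hxy
          · have h1 : e x = e' x := if_neg hxv
            have h2 : e w = e' w := if_neg hw'
            rwa [h1, h2] at hex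
          · have h1 : e y = e' y := if_neg hyv
            have h2 : e w = e' w := if_neg hw'
            rwa [h1, h2] at hey

variable [Fintype V]

lemma exists_peo (G : SimpleGraph V) (hch : IsChordal G) :
    ∃ e : V → ℕ, Function.Injective e ∧
      ∀ v x y : V, e x < e v → e y < e v → G.Adj v x → G.Adj v y → x ≠ y → G.Adj x y := by
  obtain ⟨e, hinj, _, hp⟩ := exists_peo_on G hch (univ.card) univ le_rfl
  refine ⟨e, ?_, fun v x y => hp v (mem_univ v) x (mem_univ x) y (mem_univ y)⟩
  intro u w h
  exact hinj (by simp) (by simp) h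

noncomputable def Sv (G : SimpleGraph V) (e : V → ℕ) (v : V) : Finset V :=
  univ.filter (fun u => G.Adj v u ∧ e u < e v)

section Counting
variable {G : SimpleGraph V} {e : V → ℕ}

lemma Sv_clique (hsimp : ∀ v x y : V, e x < e v → e y < e v →
    G.Adj v x → G.Adj v y → x ≠ y → G.Adj x y) (v : V) : G.IsClique (↑(Sv G e v) : Set V) := by
  intro x hx y hy hne
  have hx' := mem_filter.1 hx
  have hy' := mem_filter.1 hy
  exact hsimp v x y hx'.2.2 hy'.2.2 hx'.2.1 hy'.2.1 hne

lemma not_mem_Sv (v : V) : v ∉ Sv G e v := by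
  intro h
  exact absurd (mem_filter.1 h).2.2 (lt_irrefl _)

lemma Qv_clique (hsimp : ∀ v x y : V, e x < e v → e y < e v →
    G.Adj v x → G.Adj v y → x ≠ y → G.Adj x y) (v : V) : G.IsClique (↑(insert v (Sv G e v)) : Set V) := by
  rw [coe_insert]
  refine (Sv_clique hsimp v).insert ?_
  intro u hu _
  exact (mem_filter.1 hu).2.1

lemma Qv_card (v : V) : (insert v (Sv G e v)).card = (Sv G e v).card + 1 :=
  card_insert_of_notMem (not_mem_Sv v)

lemma clique_decomp (hinj : Function.Injective e)
    (hsimp : ∀ v x y : V, e x < e v → e y < e v →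
      G.Adj v x → G.Adj v y → x ≠ y → G.Adj x y) (t : ℕ) :
    univ.filter (fun s => G.IsNClique (t + 1) s) =
      univ.biUnion (fun v => ((Sv G e v).powersetCard t).image (insert v)) := by
  ext s
  simp only [mem_filter, mem_univ, true_and, mem_biUnion, mem_image, mem_powersetCard]
  constructor
  · intro hs
    have hne : s.Nonempty := by
      rw [← card_pos, hs.2]
      omega
    obtain ⟨v, hvs, hmax⟩ := exists_max_image s e hne
    refine ⟨v, s.erase v, ⟨?_, ?_⟩, insert_erase hvs⟩
    · intro u hu
      obtain ⟨hune, hus⟩ := mem_erase.1 hu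
      refine mem_filter.2 ⟨mem_univ u, hs.1 hvs hus (Ne.symm hune), ?_⟩
      exact lt_of_le_of_ne (hmax u hus) (fun h => hune (hinj h))
    · rw [card_erase_of_mem hvs, hs.2]
      omega
  · rintro ⟨v, T, ⟨hTsub, hTcard⟩, rfl⟩
    constructor
    · rw [coe_insert]
      refine (((Sv_clique hsimp v)).subset ?_).insert ?_
      · exact_mod_cast hTsub
      · intro u hu _
        exact (mem_filter.1 (hTsub hu)).2.1
    · rw [card_insert_of_notMem (fun h => not_mem_Sv v (hTsub h)), hTcard]

lemma cliqueCount_eq (hinj : Function.Injective e)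
    (hsimp : ∀ v x y : V, e x < e v → e y < e v →
      G.Adj v x → G.Adj v y → x ≠ y → G.Adj x y) (t : ℕ) :
    cliqueCount G (t + 1) = ∑ v, ((Sv G e v).card).choose t := by
  have h1 : {s : Finset V | G.IsNClique (t + 1) s} =
      ↑(univ.filter (fun s => G.IsNClique (t + 1) s)) := by
    ext s; simp
  rw [cliqueCount, h1, Set.ncard_coe_finset, clique_decomp hinj hsimp]
  rw [card_biUnion]
  · refine Finset.sum_congr rfl fun v _ => ?_
    rw [card_image_of_injOn, card_powersetCard]
    intro T hT T' hT' heq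
    rw [mem_coe, mem_powersetCard] at hT hT'
    have hvT : v ∉ T := fun h => not_mem_Sv v (hT.1 h)
    have hvT' : v ∉ T' := fun h => not_mem_Sv v (hT'.1 h)
    rw [← erase_insert hvT, heq, erase_insert hvT']
  · intro v _ w _ hvw
    rw [Function.onFun, disjoint_left]
    intro s hsv hsw
    obtain ⟨T, hT, rfl⟩ := mem_image.1 hsv
    obtain ⟨T', hT', heq⟩ := mem_image.1 hsw
    rw [mem_powersetCard] at hT hT'
    have hwv : w ∈ insert v T := by
      rw [← heq]; exact mem_insert_self w T'
    have hvw' : v ∈ insert w T' := by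
      rw [heq]; exact mem_insert_self v T
    have h1 : w ∈ T := (mem_insert.1 hwv).resolve_left (fun h => hvw h.symm)
    have h2 : v ∈ T' := (mem_insert.1 hvw').resolve_left hvw
    have hew : e w < e v := (mem_filter.1 (hT.1 h1)).2.2
    have hev : e v < e w := (mem_filter.1 (hT'.1 h2)).2.2
    omega

end Counting

lemma exists_max_clique {G : SimpleGraph V} {s : Finset V} (hs : G.IsClique (↑s : Set V)) :
    ∃ C, IsMaxCliqueOf G C ∧ s ⊆ C := by
  obtain ⟨C, hCmem, hCmax⟩ := exists_max_image
    (univ.filter (fun t : Finset V => G.IsClique (↑t : Set V) ∧ s ⊆ t)) card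
    ⟨s, mem_filter.2 ⟨mem_univ s, hs, subset_rfl⟩⟩
  rw [mem_filter] at hCmem
  refine ⟨C, ⟨hCmem.2.1, ?_⟩, hCmem.2.2⟩
  intro t ht hCt
  exact eq_of_subset_of_card_le hCt
    (hCmax t (mem_filter.2 ⟨mem_univ t, ht, hCmem.2.2.trans hCt⟩))

lemma kappa_bound {G : SimpleGraph V} {C D : Finset V} (hC : IsMaxCliqueOf G C)
    (hD : IsMaxCliqueOf G D) (hne : C ≠ D) : (C ∩ D).card ≤ kappaTilde G := by
  apply le_csSup
  · refine ⟨Fintype.card V, ?_⟩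
    rintro k ⟨C', D', _, _, _, rfl⟩
    exact card_le_univ _
  · exact ⟨C, D, hC, hD, hne, rfl⟩

lemma rank_vertex {G : SimpleGraph V} {e : V → ℕ} (hinj : Function.Injective e)
    (hsimp : ∀ v x y : V, e x < e v → e y < e v →
      G.Adj v x → G.Adj v y → x ≠ y → G.Adj x y)
    {C : Finset V} {j : ℕ} (hk : kappaTilde G < j)
    (hC : IsMaxCliqueOf G C) (hjC : j ≤ C.card) :
    ∃ v, v ∈ C ∧ (Sv G e v).card + 1 = j ∧ insert v (Sv G e v) ⊆ C := by
  have hj1 : 1 ≤ j := by omega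
  set F : V → Finset V := fun v => C.filter (fun u => e u < e v) with hF
  have hmono : ∀ v ∈ C, ∀ w ∈ C, e v < e w → (F v).card < (F w).card := by
    intro v hv w hw hvw
    apply card_lt_card
    constructor
    · intro u hu
      have := mem_filter.1 hu
      exact mem_filter.2 ⟨this.1, lt_trans this.2 hvw⟩
    · intro hsub
      have h1 : v ∈ F w := mem_filter.2 ⟨hv, hvw⟩
      exact absurd (mem_filter.1 (hsub h1)).2 (lt_irrefl _)
  have himg : C.image (fun v => (F v).card) = range C.card := by
    apply eq_of_subset_of_card_le
    · intro k hk'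
      obtain ⟨v, hv, rfl⟩ := mem_image.1 hk'
      rw [mem_range]
      calc (F v).card ≤ (C.erase v).card := by
            apply card_le_card
            intro u hu
            refine mem_erase.2 ⟨?_, (mem_filter.1 hu).1⟩
            intro h
            rw [h] at hu
            exact absurd (mem_filter.1 hu).2 (lt_irrefl _)
        _ < C.card := card_erase_lt_of_mem hv
    · rw [card_range, card_image_of_injOn]
      intro v hv w hw heq
      by_contra hne
      rcases lt_or_gt_of_ne (fun h => hne (hinj h) : e v ≠ e w) with h | h
      · exact absurd heq (ne_of_lt (hmono v hv w hw h))
      · exact absurd heq.symm (ne_of_lt (hmono w hw v hv h))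
  have hjm : j - 1 ∈ C.image (fun v => (F v).card) := by
    rw [himg, mem_range]
    omega
  obtain ⟨v, hvC, hrv⟩ := mem_image.1 hjm
  have hFSv : F v ⊆ Sv G e v := by
    intro u hu
    obtain ⟨huC, hue⟩ := mem_filter.1 hu
    have hne' : v ≠ u := by
      intro h
      subst h
      exact absurd hue (lt_irrefl _)
    exact mem_filter.2 ⟨mem_univ u, hC.1 hvC huC hne', hue⟩
  obtain ⟨C', hC', hQC'⟩ := exists_max_clique (Qv_clique hsimp v)
  have hCC' : C' = C := by
    by_contra hne'
    have hsub : insert v (F v) ⊆ C ∩ C' := by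
      intro u hu
      rcases mem_insert.1 hu with h | h
      · subst h
        exact mem_inter.2 ⟨hvC, hQC' (mem_insert_self _ _)⟩
      · exact mem_inter.2 ⟨(mem_filter.1 h).1, hQC' (mem_insert_of_mem (hFSv h))⟩
    have hvF : v ∉ F v := fun h => absurd (mem_filter.1 h).2 (lt_irrefl _)
    have hjcard : j ≤ (C ∩ C').card := by
      have h1 : (insert v (F v)).card = j := by
        rw [card_insert_of_notMem hvF]
        omega
      rw [← h1]
      exact card_le_card hsub
    have := kappa_bound hC hC' (fun h => hne' h.symm)
    omega
  have hSvF : Sv G e v ⊆ F v := by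
    intro u hu
    have h1 : u ∈ C' := hQC' (mem_insert_of_mem hu)
    rw [hCC'] at h1
    exact mem_filter.2 ⟨h1, (mem_filter.1 hu).2.2⟩
  refine ⟨v, hvC, ?_, ?_⟩
  · rw [subset_antisymm hSvF hFSv]
    omega
  · intro u hu
    rcases mem_insert.1 hu with h | h
    · subst h; exact hvC
    · exact (mem_filter.1 (hSvF h)).1

lemma key_ineq {G : SimpleGraph V} {e : V → ℕ} (hinj : Function.Injective e)
    (hsimp : ∀ v x y : V, e x < e v → e y < e v →
      G.Adj v x → G.Adj v y → x ≠ y → G.Adj x y)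
    {i j : ℕ} (hk : kappaTilde G < j) (hji : j ≤ i) :
    (univ.filter (fun v => (Sv G e v).card + 1 = i)).card ≤
      (univ.filter (fun v => (Sv G e v).card + 1 = j)).card := by
  set MCi := univ.filter (fun C : Finset V => IsMaxCliqueOf G C ∧ i ≤ C.card) with hMCi
  set MCj := univ.filter (fun C : Finset V => IsMaxCliqueOf G C ∧ j ≤ C.card) with hMCj
  have h1 : (univ.filter (fun v => (Sv G e v).card + 1 = i)).card ≤ MCi.card := by
    choose φ hφmax hφsub using fun v : V => exists_max_clique (Qv_clique hsimp v)
    have hspec : ∀ v : V, IsMaxCliqueOf G (φ v) ∧ insert v (Sv G e v) ⊆ φ v :=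
      fun v => ⟨hφmax v, hφsub v⟩
    apply card_le_card_of_injOn φ
    · intro v hv
      refine mem_filter.2 ⟨mem_univ _, (hspec v).1, ?_⟩
      have h2 := card_le_card (hspec v).2
      rw [Qv_card] at h2
      have := (mem_filter.1 hv).2
      omega
    · have key : ∀ v w, v ∈ univ.filter (fun v => (Sv G e v).card + 1 = i) →
          w ∈ univ.filter (fun v => (Sv G e v).card + 1 = i) →
          φ v = φ w → e v < e w → False := by
        intro v w hv hw heq hvw
        have hmv := (mem_filter.1 hv).2
        have hmw := (mem_filter.1 hw).2
        have hsub : insert v (Sv G e v) ⊆ Sv G e w := by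
          intro u hu
          have huφ : u ∈ φ w := by
            rw [← heq]
            exact (hspec v).2 hu
          have hwφ : w ∈ φ w := (hspec w).2 (mem_insert_self _ _)
          have hue : e u < e w := by
            rcases mem_insert.1 hu with h | h
            · subst h; exact hvw
            · exact lt_trans (mem_filter.1 h).2.2 hvw
          have hne : w ≠ u := by
            intro h
            subst h
            exact absurd hue (lt_irrefl _)
          exact mem_filter.2 ⟨mem_univ u, (hspec w).1.1 hwφ huφ hne, hue⟩
        have h2 := card_le_card hsub
        rw [Qv_card] at h2
        omega
      intro v hv w hw heq
      by_contra hne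
      rcases lt_or_gt_of_ne (fun h => hne (hinj h) : e v ≠ e w) with h | h
      · exact key v w (mem_coe.1 hv) (mem_coe.1 hw) heq h
      · exact key w v (mem_coe.1 hw) (mem_coe.1 hv) heq.symm h
  have h2 : MCi.card ≤ MCj.card := by
    apply card_le_card
    intro C hC
    have := mem_filter.1 hC
    exact mem_filter.2 ⟨this.1, this.2.1, by omega⟩
  have h3 : MCj.card ≤ (univ.filter (fun v => (Sv G e v).card + 1 = j)).card := by
    rcases MCj.eq_empty_or_nonempty with hemp | ⟨C0, hC0⟩
    · rw [hemp]
      simp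
    · have hC0' := (mem_filter.1 hC0).2
      obtain ⟨v0, -, -, -⟩ := rank_vertex hinj hsimp hk hC0'.1 hC0'.2
      set ψ : Finset V → V := fun C =>
        if hC : IsMaxCliqueOf G C ∧ j ≤ C.card then
          (rank_vertex hinj hsimp hk hC.1 hC.2).choose
        else v0 with hψ
      have hψspec : ∀ C (hC : IsMaxCliqueOf G C ∧ j ≤ C.card),
          ψ C ∈ C ∧ (Sv G e (ψ C)).card + 1 = j ∧ insert (ψ C) (Sv G e (ψ C)) ⊆ C := by
        intro C hC
        have : ψ C = (rank_vertex hinj hsimp hk hC.1 hC.2).choose := dif_pos hC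
        rw [this]
        exact (rank_vertex hinj hsimp hk hC.1 hC.2).choose_spec
      apply card_le_card_of_injOn ψ
      · intro C hC
        have hC' := (mem_filter.1 hC).2
        exact mem_filter.2 ⟨mem_univ _, (hψspec C hC').2.1⟩
      · intro C hC D hD heq
        by_contra hne
        have hC' := (mem_filter.1 (mem_coe.1 hC)).2
        have hD' := (mem_filter.1 (mem_coe.1 hD)).2
        have hsub : insert (ψ C) (Sv G e (ψ C)) ⊆ C ∩ D := by
          apply subset_inter (hψspec C hC').2.2
          rw [heq]
          exact (hψspec D hD').2.2
        have hcard := card_le_card hsub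
        rw [Qv_card] at hcard
        have hj' := (hψspec C hC').2.1
        have := kappa_bound hC'.1 hD'.1 hne
        omega
  omega

end BVec

/-- For a non-complete chordal graph `G` with largest clique size `d` and `b`-vector `b`,
one has `b i ≤ b j` for all indices `i, j` with `κ̃(G) < j ≤ i ≤ d`. -/
theorem stmt4 {V : Type} [Fintype V] [DecidableEq V] (G : SimpleGraph V)
    (hnc : G ≠ ⊤) (hch : IsChordal G)
    (d : ℕ) (hd : ∃ s : Finset V, G.IsNClique d s)
    (hdmax : ∀ (m : ℕ) (s : Finset V), G.IsNClique m s → m ≤ d)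
    (b : ℕ → ℤ)
    (hb : ∀ x : ℤ, ∑ i ∈ Finset.Icc 1 d, b i * (x + 1) ^ (i - 1) =
      ∑ i ∈ Finset.Icc 1 d, (cliqueCount G i : ℤ) * x ^ (i - 1))
    (i j : ℕ) (hj : kappaTilde G < j) (hji : j ≤ i) (hi : i ≤ d) :
    b i ≤ b j := by
  classical
  obtain ⟨e, hinj, hsimp⟩ := BVec.exists_peo G hch
  have hmd : ∀ v : V, (BVec.Sv G e v).card + 1 ≤ d := fun v =>
    hdmax _ _ ⟨BVec.Qv_clique hsimp v, BVec.Qv_card v⟩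
  set Bv : ℕ → ℕ := fun k => (univ.filter (fun v => (BVec.Sv G e v).card + 1 = k)).card
    with hBv
  have hident : ∀ x : ℤ, ∑ k ∈ Finset.Icc 1 d, (cliqueCount G k : ℤ) * x ^ (k - 1) =
      ∑ k ∈ Finset.Icc 1 d, (Bv k : ℤ) * (x + 1) ^ (k - 1) := by
    intro x
    have hstep1 : ∀ k ∈ Finset.Icc 1 d, (cliqueCount G k : ℤ) * x ^ (k - 1) =
        ∑ v, (((BVec.Sv G e v).card.choose (k - 1) : ℤ) * x ^ (k - 1)) := by
      intro k hk
      rw [mem_Icc] at hk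
      have h2 : cliqueCount G k = ∑ v, ((BVec.Sv G e v).card.choose (k - 1)) := by
        have := BVec.cliqueCount_eq hinj hsimp (k - 1)
        rwa [(by omega : k - 1 + 1 = k)] at this
      rw [h2]
      push_cast
      rw [sum_mul]
    rw [Finset.sum_congr rfl hstep1, Finset.sum_comm]
    have hstep3 : ∀ v : V, ∑ k ∈ Finset.Icc 1 d,
        (((BVec.Sv G e v).card.choose (k - 1) : ℤ) * x ^ (k - 1)) =
        (x + 1) ^ (BVec.Sv G e v).card := by
      intro v
      have hmd' : (BVec.Sv G e v).card + 1 ≤ d := hmd v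
      set m := (BVec.Sv G e v).card with hm
      have hre : ∑ k ∈ Finset.Icc 1 d, ((m.choose (k - 1) : ℤ) * x ^ (k - 1)) =
          ∑ t ∈ Finset.range d, ((m.choose t : ℤ) * x ^ t) := by
        rw [show Finset.Icc 1 d = Finset.Ico 1 (d + 1) by rw [Finset.Ico_add_one_right_eq_Icc]]
        rw [Finset.sum_Ico_eq_sum_range]
        refine Finset.sum_congr (by norm_num) fun t _ => ?_
        rw [(by omega : 1 + t - 1 = t)]
      rw [hre]
      rw [← Finset.sum_subset
        (by intro t ht; rw [mem_range] at *; omega : Finset.range (m + 1) ⊆ Finset.range d)]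
      · rw [add_pow]
        refine Finset.sum_congr rfl fun t ht => ?_
        rw [one_pow, mul_one, mul_comm]
      · intro t ht hnt
        rw [mem_range] at hnt
        rw [Nat.choose_eq_zero_of_lt (by omega)]
        simp
    rw [Finset.sum_congr rfl (fun v _ => hstep3 v)]
    rw [← Finset.sum_fiberwise_of_maps_to
      (fun v _ => mem_Icc.2 ⟨Nat.le_add_left 1 _, hmd v⟩) (fun v => ((x : ℤ) + 1) ^ (BVec.Sv G e v).card)]
    refine Finset.sum_congr rfl fun k hk => ?_
    have hcongr : ∀ v ∈ univ.filter (fun v => (BVec.Sv G e v).card + 1 = k),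
        ((x : ℤ) + 1) ^ (BVec.Sv G e v).card = (x + 1) ^ (k - 1) := by
      intro v hv
      have := (mem_filter.1 hv).2
      rw [(by omega : (BVec.Sv G e v).card = k - 1)]
    refine (Finset.sum_congr rfl hcongr).trans ?_
    rw [Finset.sum_const, nsmul_eq_mul]
  have hble : ∀ k ∈ Finset.Icc 1 d, b k = (Bv k : ℤ) := by
    have hall : ∀ y : ℤ, ∑ k ∈ Finset.Icc 1 d, (b k - (Bv k : ℤ)) * y ^ (k - 1) = 0 := by
      intro y
      have h1 := hb (y - 1)
      rw [hident (y - 1), (by ring : y - 1 + 1 = y)] at h1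
      calc ∑ k ∈ Finset.Icc 1 d, (b k - (Bv k : ℤ)) * y ^ (k - 1)
          = ∑ k ∈ Finset.Icc 1 d, (b k * y ^ (k - 1) - (Bv k : ℤ) * y ^ (k - 1)) :=
            Finset.sum_congr rfl fun k _ => by ring
        _ = (∑ k ∈ Finset.Icc 1 d, b k * y ^ (k - 1)) -
            ∑ k ∈ Finset.Icc 1 d, (Bv k : ℤ) * y ^ (k - 1) := Finset.sum_sub_distrib _ _
        _ = 0 := by rw [h1]; ring
    set P : Polynomial ℤ :=
      ∑ k ∈ Finset.Icc 1 d, Polynomial.C (b k - (Bv k : ℤ)) * Polynomial.X ^ (k - 1) with hP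
    have hP0 : P = 0 := by
      apply Polynomial.funext
      intro y
      rw [hP]
      simp only [Polynomial.eval_finset_sum, Polynomial.eval_mul, Polynomial.eval_C,
        Polynomial.eval_pow, Polynomial.eval_X, Polynomial.eval_zero]
      exact hall y
    intro k hk
    have hk' := mem_Icc.1 hk
    have hco := congrArg (fun p => Polynomial.coeff p (k - 1)) hP0
    rw [hP] at hco
    simp only [Polynomial.finset_sum_coeff, Polynomial.coeff_C_mul, Polynomial.coeff_X_pow,
      Polynomial.coeff_zero] at hco
    rw [Finset.sum_eq_single k] at hco
    · rw [if_pos rfl, mul_one] at hco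
      linarith [hco]
    · intro l hl hlk
      have hl' := mem_Icc.1 hl
      rw [if_neg (by omega : ¬ k - 1 = l - 1), mul_zero]
    · intro hkn
      exact absurd hk hkn
  have hj1 : 1 ≤ j := by omega
  have hiI : i ∈ Finset.Icc 1 d := mem_Icc.2 ⟨by omega, hi⟩
  have hjI : j ∈ Finset.Icc 1 d := mem_Icc.2 ⟨hj1, by omega⟩
  rw [hble i hiI, hble j hjI]
  exact_mod_cast BVec.key_ineq hinj hsimp hj hji
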